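/- arXiv:2407.16585 — 4 statements merged into one kernel-verified Lean document; each statement's English description precedes it below -/
import Mathlib

section
/- Shifting a fan preserves properness: let φ be a proper partial q-edge-coloring and F = (x, y_0, …, y_{k−1}) a fan, i.e., y_0, …, y_{k−1} are distinct neighbors of x, φ(x y_0) = blank, and for each 1 ≤ i < k the color φ(x y_i) is missing at y_{i−1}. Define ψ by setting ψ(x y_i) = φ(x y_{i+1}) for 0 ≤ i < k−1, ψ(x y_{k−1}) = blank, and ψ(e) = φ(e) for all other edges. Then ψ is a proper partial q-edge-coloring. -/
/-- A proper partial `q`-edge-coloring: colored edges sharing an endpoint get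
distinct colors. -/
def ProperPartial {V : Type*} (G : SimpleGraph V) {q : ℕ}
    (φ : Sym2 V → Option (Fin q)) : Prop :=
  ∀ e ∈ G.edgeSet, ∀ f ∈ G.edgeSet, e ≠ f → (∃ v, v ∈ e ∧ v ∈ f) →
    φ e ≠ none → φ e ≠ φ f

/-- The color `c` is missing at `v` under `φ`. -/
def MissingAt {V : Type*} (G : SimpleGraph V) {q : ℕ}
    (φ : Sym2 V → Option (Fin q)) (v : V) (c : Fin q) : Prop :=
  ∀ w, G.Adj v w → φ s(v, w) ≠ some c

/-- shifting a fan preserves properness. -/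
theorem shift_fan_proper {V : Type*} (G : SimpleGraph V) (q : ℕ)
    (φ ψ : Sym2 V → Option (Fin q)) (hφ : ProperPartial G φ)
    (x : V) (k : ℕ) (hk : 0 < k) (y : ℕ → V)
    (hinj : ∀ i < k, ∀ j < k, y i = y j → i = j)
    (hadj : ∀ i < k, G.Adj x (y i))
    (hblank : φ s(x, y 0) = none)
    (hfan : ∀ i, 1 ≤ i → i < k → ∃ c : Fin q,
      φ s(x, y i) = some c ∧ MissingAt G φ (y (i - 1)) c)
    (hψ₁ : ∀ i, i < k - 1 → ψ s(x, y i) = φ s(x, y (i + 1)))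
    (hψ₂ : ψ s(x, y (k - 1)) = none)
    (hψ₃ : ∀ e : Sym2 V, (∀ i < k, e ≠ s(x, y i)) → ψ e = φ e) :
    ProperPartial G ψ := by
  classical
  have hmem : ∀ i, i < k → s(x, y i) ∈ G.edgeSet := fun i hi => hadj i hi
  rintro e he f hf hef ⟨v, hve, hvf⟩ hne
  by_cases heF : ∃ i, i < k ∧ e = s(x, y i)
  · obtain ⟨i, hi, rfl⟩ := heF
    by_cases hik : i = k - 1
    · subst hik; exact absurd hψ₂ hne
    have hik' : i < k - 1 := by omega
    have hi1 : i + 1 < k := by omega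
    obtain ⟨c, hc, hmiss⟩ := hfan (i + 1) (by omega) hi1
    simp only [Nat.add_sub_cancel] at hmiss
    have hψe : ψ s(x, y i) = some c := by rw [hψ₁ i hik', hc]
    rw [hψe]
    by_cases hfF : ∃ j, j < k ∧ f = s(x, y j)
    · obtain ⟨j, hj, rfl⟩ := hfF
      have hij : i ≠ j := fun h => hef (by rw [h])
      by_cases hjk : j = k - 1
      · subst hjk; rw [hψ₂]; simp
      have hjk' : j < k - 1 := by omega
      have hj1 : j + 1 < k := by omega
      obtain ⟨d, hd, _⟩ := hfan (j + 1) (by omega) hj1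
      have hψf : ψ s(x, y j) = some d := by rw [hψ₁ j hjk', hd]
      rw [hψf]
      have hne2 : s(x, y (i + 1)) ≠ s(x, y (j + 1)) := by
        intro h
        have h' := Sym2.congr_right.mp h
        have := hinj (i + 1) hi1 (j + 1) hj1 h'
        omega
      have hmain := hφ _ (hmem (i + 1) hi1) _ (hmem (j + 1) hj1) hne2
        ⟨x, by simp, by simp⟩ (by rw [hc]; simp)
      rwa [hc, hd] at hmain
    · push_neg at hfF
      rw [hψ₃ f (fun j hj => hfF j hj)]
      rcases Sym2.mem_iff.mp hve with rfl | rfl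
      · have hne2 : s(v, y (i + 1)) ≠ f := fun h => hfF (i + 1) hi1 h.symm
        have hmain := hφ _ (hmem (i + 1) hi1) f hf hne2
          ⟨v, by simp, hvf⟩ (by rw [hc]; simp)
        rwa [hc] at hmain
      · obtain ⟨w, rfl⟩ := Sym2.mem_iff_exists.mp hvf
        have hadjw : G.Adj (y i) w := hf
        exact fun h => hmiss w hadjw h.symm
  · push_neg at heF
    rw [hψ₃ e (fun i hi => heF i hi)] at hne ⊢
    by_cases hfF : ∃ j, j < k ∧ f = s(x, y j)
    · obtain ⟨j, hj, rfl⟩ := hfF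
      by_cases hjk : j = k - 1
      · subst hjk; rw [hψ₂]; exact fun h => hne h
      have hjk' : j < k - 1 := by omega
      have hj1 : j + 1 < k := by omega
      obtain ⟨d, hd, hmiss⟩ := hfan (j + 1) (by omega) hj1
      simp only [Nat.add_sub_cancel] at hmiss
      rw [hψ₁ j hjk', hd]
      rcases Sym2.mem_iff.mp hvf with rfl | rfl
      · have hne2 : e ≠ s(v, y (j + 1)) := heF (j + 1) hj1
        have hmain := hφ e he _ (hmem (j + 1) hj1) hne2 ⟨v, hve, by simp⟩ hne
        rwa [hd] at hmain
      · obtain ⟨w, rfl⟩ := Sym2.mem_iff_exists.mp hve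
        have hadjw : G.Adj (y j) w := he
        exact hmiss w hadjw
    · push_neg at hfF
      rw [hψ₃ f (fun j hj => hfF j hj)]
      exact hφ e he f hf hef ⟨v, hve, hvf⟩ hne
end

section
/- Multiplicative Azuma inequality for supermartingale-like sums: let X_1, …, X_n be random variables taking values in [0, c] with E[X_i | X_1, …, X_{i−1}] ≤ a_i for each i, and let μ = a_1 + ⋯ + a_n. Then for every δ > 0, Pr[X_1 + ⋯ + X_n ≥ (1+δ)μ] ≤ exp(−δ²μ / ((2+δ)c)). -/
open MeasureTheory

private lemma log_ineq_aux (x : ℝ) (hx : 0 ≤ x) : 2*x ≤ (2+x) * Real.log (1+x) := by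
  set f : ℝ → ℝ := fun y => (2+y) * Real.log (1+y) - 2*y with hf
  have hmono : MonotoneOn f (Set.Ici 0) := by
    have hder : ∀ y ∈ interior (Set.Ici (0:ℝ)), 0 ≤ deriv f y := by
      intro y hy
      rw [interior_Ici] at hy
      have hy' : (0:ℝ) < y := hy
      have h1 : (0:ℝ) < 1 + y := by linarith
      have hd : HasDerivAt f (Real.log (1+y) + (2+y) * (1+y)⁻¹ - 2) y := by
        have h2 : HasDerivAt (fun y : ℝ => Real.log (1+y)) (1+y)⁻¹ y := by
          simpa [Function.comp_def] using ((Real.hasDerivAt_log h1.ne').comp y ((hasDerivAt_const y 1).add (hasDerivAt_id y)))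
        have h3 : HasDerivAt (fun y : ℝ => (2+y) * Real.log (1+y)) (1 * Real.log (1+y) + (2+y) * (1+y)⁻¹) y :=
          HasDerivAt.mul (by simpa using (hasDerivAt_id y).const_add 2) h2
        simpa [hf, Pi.sub_def] using h3.sub ((hasDerivAt_id y).const_mul 2)
      rw [hd.deriv]
      have hlog : y/(1+y) ≤ Real.log (1+y) := by
        have := Real.log_le_sub_one_of_pos (x := (1+y)⁻¹) (by positivity)
        rw [Real.log_inv] at this
        have h4 : y / (1+y) = -((1+y)⁻¹ - 1) := by field_simp; ring
        linarith [h4 ▸ (by linarith : -((1+y)⁻¹ - 1) ≤ Real.log (1+y))]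
      have : (2+y) * (1+y)⁻¹ - 2 = -(y/(1+y)) := by field_simp; ring
      linarith
    apply monotoneOn_of_deriv_nonneg (convex_Ici 0) _ _ hder
    · apply ContinuousOn.sub
      apply ContinuousOn.mul (by fun_prop)
      · apply ContinuousOn.log (by fun_prop)
        intro y hy; simp at hy; intro h; linarith
      · fun_prop
    · apply DifferentiableOn.sub
      apply DifferentiableOn.mul (by fun_prop)
      · apply DifferentiableOn.log (by fun_prop)
        intro y hy
        rw [interior_Ici] at hy
        have : (0:ℝ) < y := hy
        intro h; linarith
      · fun_prop
  have := hmono (Set.self_mem_Ici) (Set.mem_Ici.mpr hx) hx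
  simp [hf] at this
  linarith

/-- multiplicative Azuma inequality for supermartingale-like
sums: if each `X i` takes values in `[0, c]` and
`E[X i | X 0, …, X (i-1)] ≤ a i` a.s., then with `μ = ∑ a i`, for every
`δ > 0`, `Pr[∑ X i ≥ (1+δ)μ] ≤ exp(-δ²μ/((2+δ)c))`. -/
theorem multiplicative_azuma {Ω : Type*} [MeasureSpace Ω]
    [IsProbabilityMeasure (volume : Measure Ω)]
    (n : ℕ) (X : ℕ → Ω → ℝ) (hXm : ∀ i, Measurable (X i))
    (c : ℝ) (hc : 0 < c) (hbdd : ∀ i, ∀ ω, X i ω ∈ Set.Icc 0 c)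
    (a : ℕ → ℝ) (ha : ∀ i, 0 ≤ a i)
    (hcond : ∀ i < n, ∀ᵐ ω ∂(volume : Measure Ω),
      MeasureTheory.condExp
        (⨆ j ∈ Finset.range i, MeasurableSpace.comap (X j) inferInstance)
        (volume : Measure Ω) (X i) ω ≤ a i)
    (μ : ℝ) (hμ : μ = ∑ i ∈ Finset.range n, a i) (δ : ℝ) (hδ : 0 < δ) :
    (volume : Measure Ω) {ω | (1 + δ) * μ ≤ ∑ i ∈ Finset.range n, X i ω} ≤
      ENNReal.ofReal (Real.exp (-(δ ^ 2 * μ) / ((2 + δ) * c))) := by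
  classical
  have hμ0 : 0 ≤ μ := hμ ▸ Finset.sum_nonneg fun i _ => ha i
  set L : ℝ := Real.log (1 + δ) with hL
  have hL0 : 0 < L := Real.log_pos (by linarith)
  set t : ℝ := L / c with ht
  have ht0 : 0 < t := div_pos hL0 hc
  set r : ℝ := δ / c with hr
  have hr0 : 0 ≤ r := le_of_lt (div_pos hδ hc)
  -- pointwise bound exp (t * x) ≤ 1 + r * x for x ∈ [0, c]
  have hpt : ∀ i ω, Real.exp (t * X i ω) ≤ 1 + r * X i ω := by
    intro i ω
    obtain ⟨hx0, hxc⟩ := hbdd i ω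
    set s : ℝ := X i ω / c with hs
    have hs0 : 0 ≤ s := div_nonneg hx0 hc.le
    have hs1 : s ≤ 1 := (div_le_one hc).mpr hxc
    have hconv := convexOn_exp.2 (Set.mem_univ (0:ℝ)) (Set.mem_univ L)
      (by linarith : (0:ℝ) ≤ 1 - s) hs0 (by ring)
    simp only [smul_eq_mul, mul_zero, zero_add, Real.exp_zero] at hconv
    have hE : Real.exp L = 1 + δ := Real.exp_log (by linarith)
    have h1 : t * X i ω = s * L := by field_simp [ht, hs]; ring
    have h2 : r * X i ω = s * δ := by field_simp [hr, hs]; ring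
    rw [h1, h2]
    calc Real.exp (s * L) ≤ (1-s) * 1 + s * Real.exp L := by simpa using hconv
      _ = 1 + s * δ := by rw [hE]; ring
  -- filtration
  set F : ℕ → MeasurableSpace Ω :=
    fun i => ⨆ j ∈ Finset.range i, MeasurableSpace.comap (X j) inferInstance with hF
  have hFle : ∀ i, F i ≤ (inferInstance : MeasurableSpace Ω) := by
    intro i
    apply iSup₂_le
    intro j _
    exact measurable_iff_comap_le.mp (hXm j)
  have hFmeas : ∀ i j, j < i → Measurable[F i] (X j) := by
    intro i j hj
    apply measurable_iff_comap_le.mpr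
    exact le_biSup (f := fun j => MeasurableSpace.comap (X j) inferInstance) (Finset.mem_range.mpr hj)
  -- partial sums
  set Sk : ℕ → Ω → ℝ := fun k ω => ∑ j ∈ Finset.range k, X j ω with hSk
  have hSkF : ∀ k, Measurable[F k] (Sk k) :=
    fun k => Finset.measurable_sum _ fun j hj => hFmeas k j (Finset.mem_range.mp hj)
  have hSkm : ∀ k, Measurable (Sk k) :=
    fun k => Finset.measurable_sum _ fun j _ => hXm j
  have hSkbd : ∀ k ω, 0 ≤ Sk k ω ∧ Sk k ω ≤ k * c := by
    intro k ω
    constructor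
    · exact Finset.sum_nonneg fun j _ => (hbdd j ω).1
    · calc Sk k ω ≤ ∑ j ∈ Finset.range k, c :=
            Finset.sum_le_sum fun j _ => (hbdd j ω).2
        _ = k * c := by simp [mul_comm]
  -- integrability helper
  have hint : ∀ (f : Ω → ℝ) (C : ℝ), Measurable f → (∀ ω, |f ω| ≤ C) →
      Integrable f (volume : Measure Ω) := by
    intro f C hf hb
    exact ⟨hf.aestronglyMeasurable, HasFiniteIntegral.of_bounded (ae_of_all _ hb)⟩
  have hintX : ∀ i, Integrable (X i) (volume : Measure Ω) := by
    intro i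
    refine hint (X i) c (hXm i) fun ω => ?_
    rw [abs_of_nonneg (hbdd i ω).1]; exact (hbdd i ω).2
  have hintE : ∀ k, Integrable (fun ω => Real.exp (t * Sk k ω)) (volume : Measure Ω) := by
    intro k
    refine hint _ (Real.exp (t * (k * c))) (Real.measurable_exp.comp ((hSkm k).const_mul t))
      fun ω => ?_
    rw [abs_of_pos (Real.exp_pos _)]
    exact Real.exp_le_exp.mpr (mul_le_mul_of_nonneg_left (hSkbd k ω).2 ht0.le)
  have hintEX : ∀ i, Integrable (fun ω => Real.exp (t * X i ω)) (volume : Measure Ω) := by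
    intro i
    refine hint _ (Real.exp (t * c)) (Real.measurable_exp.comp ((hXm i).const_mul t))
      fun ω => ?_
    rw [abs_of_pos (Real.exp_pos _)]
    exact Real.exp_le_exp.mpr (mul_le_mul_of_nonneg_left (hbdd i ω).2 ht0.le)
  -- the key induction
  have key : ∀ k, k ≤ n →
      ∫ ω, Real.exp (t * Sk k ω) ≤ ∏ i ∈ Finset.range k, (1 + r * a i) := by
    intro k
    induction k with
    | zero => intro _; simp [hSk]
    | succ k ih =>
      intro hkn
      have hk : k < n := hkn
      have ihk := ih (le_of_lt hk)
      set g : Ω → ℝ := fun ω => Real.exp (t * Sk k ω) with hg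
      set h : Ω → ℝ := fun ω => Real.exp (t * X k ω) with hh
      have hgh : (fun ω => Real.exp (t * Sk (k+1) ω)) = g * h := by
        funext ω
        simp only [hg, hh, hSk, Pi.mul_apply, Finset.sum_range_succ, mul_add, Real.exp_add]
      have hgF : StronglyMeasurable[F k] g :=
        (Real.measurable_exp.comp (Measurable.const_mul (hSkF k) t)).stronglyMeasurable
      have hintg : Integrable g (volume : Measure Ω) := hintE k
      have hinth : Integrable h (volume : Measure Ω) := hintEX k
      have hintgh : Integrable (g * h) (volume : Measure Ω) := by
        rw [← hgh]; exact hintE (k+1)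
      -- pull-out property
      have hpull := condExp_mul_of_stronglyMeasurable_left (m := F k) (μ := (volume : Measure Ω))
        hgF hintgh hinth
      -- bound the conditional expectation of h
      have hrhs : Integrable ((fun _ : Ω => (1:ℝ)) + r • X k) (volume : Measure Ω) :=
        (integrable_const 1).add ((hintX k).smul r)
      have hmono := condExp_mono (m := F k) hinth hrhs
        (ae_of_all _ fun ω => by simpa using hpt k ω)
      have hadd := condExp_add (m := F k) (μ := (volume : Measure Ω))
        (integrable_const (1:ℝ)) ((hintX k).smul r)
      have hsmul := condExp_smul (m := F k) (μ := (volume : Measure Ω)) (r : ℝ) (X k)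
      have hcondk := hcond k hk
      have hbound : (volume : Measure Ω)[h | F k] ≤ᵐ[volume] fun _ => 1 + r * a k := by
        filter_upwards [hmono, hadd, hsmul, hcondk] with ω h1 h2 h3 h4
        have hconst : (volume : Measure Ω)[(fun _ : Ω => (1:ℝ)) | F k] = fun _ => 1 :=
          condExp_const (hFle k) 1
        calc ((volume : Measure Ω)[h | F k]) ω
            ≤ ((volume : Measure Ω)[(fun _ : Ω => (1:ℝ)) + r • X k | F k]) ω := h1
          _ = ((volume : Measure Ω)[(fun _ : Ω => (1:ℝ)) | F k]) ω
              + ((volume : Measure Ω)[r • X k | F k]) ω := by rw [h2]; simp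
          _ = 1 + r * ((volume : Measure Ω)[X k | F k]) ω := by
              rw [hconst, h3]; simp
          _ ≤ 1 + r * a k := by
              have := mul_le_mul_of_nonneg_left h4 hr0
              linarith
      -- combine
      have step1 : ∫ ω, (g * h) ω = ∫ ω, ((volume : Measure Ω)[g * h | F k]) ω :=
        (integral_condExp (hFle k)).symm
      have step2 : ∫ ω, ((volume : Measure Ω)[g * h | F k]) ω
          = ∫ ω, g ω * ((volume : Measure Ω)[h | F k]) ω := by
        apply integral_congr_ae
        filter_upwards [hpull] with ω hω
        simpa using hω
      have hintgc : Integrable (fun ω => g ω * ((volume : Measure Ω)[h | F k]) ω)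
          (volume : Measure Ω) := by
        apply (integrable_condExp (m := F k) (f := g * h)).congr
        filter_upwards [hpull] with ω hω
        simpa using hω
      have step3 : ∫ ω, g ω * ((volume : Measure Ω)[h | F k]) ω
          ≤ ∫ ω, g ω * (1 + r * a k) := by
        apply integral_mono_ae hintgc (hintg.mul_const _)
        filter_upwards [hbound] with ω hω
        exact mul_le_mul_of_nonneg_left hω (le_of_lt (Real.exp_pos _))
      have step4 : ∫ ω, g ω * (1 + r * a k) = (∫ ω, g ω) * (1 + r * a k) :=
        integral_mul_const _ _
      have hfac : (0:ℝ) ≤ 1 + r * a k := by nlinarith [mul_nonneg hr0 (ha k)]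
      calc ∫ ω, Real.exp (t * Sk (k+1) ω) = ∫ ω, (g * h) ω := by rw [hgh]
        _ = ∫ ω, ((volume : Measure Ω)[g * h | F k]) ω := step1
        _ = ∫ ω, g ω * ((volume : Measure Ω)[h | F k]) ω := step2
        _ ≤ ∫ ω, g ω * (1 + r * a k) := step3
        _ = (∫ ω, g ω) * (1 + r * a k) := step4
        _ ≤ (∏ i ∈ Finset.range k, (1 + r * a i)) * (1 + r * a k) :=
            mul_le_mul_of_nonneg_right ihk hfac
        _ = ∏ i ∈ Finset.range (k+1), (1 + r * a i) := (Finset.prod_range_succ _ _).symm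
  -- mgf bound
  have hmgf : ∫ ω, Real.exp (t * Sk n ω) ≤ Real.exp (r * μ) := by
    calc ∫ ω, Real.exp (t * Sk n ω) ≤ ∏ i ∈ Finset.range n, (1 + r * a i) := key n le_rfl
      _ ≤ ∏ i ∈ Finset.range n, Real.exp (r * a i) := by
          apply Finset.prod_le_prod
          · intro i _; nlinarith [mul_nonneg hr0 (ha i)]
          · intro i _
            have := Real.add_one_le_exp (r * a i)
            linarith
      _ = Real.exp (∑ i ∈ Finset.range n, r * a i) := (Real.exp_sum _ _).symm
      _ = Real.exp (r * μ) := by rw [hμ, Finset.mul_sum]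
  -- Markov / Chernoff step
  have hmarkov := ProbabilityTheory.measure_ge_le_exp_mul_mgf (X := Sk n)
    (μ := (volume : Measure Ω)) ((1+δ)*μ) ht0.le (hintE n)
  rw [ProbabilityTheory.mgf] at hmarkov
  -- final exponent inequality
  have hexp : Real.exp (-t * ((1+δ)*μ)) * Real.exp (r * μ)
      ≤ Real.exp (-(δ ^ 2 * μ) / ((2 + δ) * c)) := by
    rw [← Real.exp_add, Real.exp_le_exp]
    have hkey := log_ineq_aux δ hδ.le
    have h2δ : (0:ℝ) < 2 + δ := by linarith
    have key2 : δ + δ^2/(2+δ) ≤ (1+δ)*L := by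
      rw [← sub_nonneg]
      have heq : (1+δ)*L - (δ + δ^2/(2+δ)) = ((2+δ)*((1+δ)*L) - (2*δ*(1+δ))) / (2+δ) := by
        field_simp; ring
      rw [heq]
      apply div_nonneg _ h2δ.le
      nlinarith [hkey, hδ]
    have hq : δ - (1+δ)*L ≤ -(δ^2/(2+δ)) := by linarith
    have := mul_le_mul_of_nonneg_left hq (div_nonneg hμ0 hc.le)
    calc -t * ((1+δ)*μ) + r * μ = (μ/c) * (δ - (1+δ)*L) := by rw [ht, hr]; ring
      _ ≤ (μ/c) * (-(δ^2/(2+δ))) := this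
      _ = -(δ ^ 2 * μ) / ((2 + δ) * c) := by
          field_simp
  -- conclude
  have hset : {ω | (1 + δ) * μ ≤ ∑ i ∈ Finset.range n, X i ω}
      = {ω | (1 + δ) * μ ≤ Sk n ω} := rfl
  rw [hset]
  have hne : (volume : Measure Ω) {ω | (1 + δ) * μ ≤ Sk n ω} ≠ ⊤ := measure_ne_top _ _
  rw [← ENNReal.ofReal_toReal hne]
  apply ENNReal.ofReal_le_ofReal
  calc ((volume : Measure Ω) {ω | (1 + δ) * μ ≤ Sk n ω}).toReal
      ≤ Real.exp (-t * ((1+δ)*μ)) * ∫ ω, Real.exp (t * Sk n ω) := hmarkov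
    _ ≤ Real.exp (-t * ((1+δ)*μ)) * Real.exp (r * μ) := by
        apply mul_le_mul_of_nonneg_left hmgf (le_of_lt (Real.exp_pos _))
    _ ≤ Real.exp (-(δ ^ 2 * μ) / ((2 + δ) * c)) := hexp
end

section
/- Let φ be a proper q-edge-coloring of all but one edge x y of a graph G with q ≥ Δ(G)+1, where x y is uncolored. If α is a color missing at both the pivot x and the last fan vertex y_{k−1} of a fan F = (x, y_0 = y, …, y_{k−1}), then after shifting F the edge x y_{k−1} is uncolored and α remains missing at both x and y_{k−1}; hence assigning α to x y_{k−1} yields a proper partial coloring whose domain has one more edge than the domain of φ. -/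
/-- if `φ` properly colors all edges but the uncolored edge
`x y₀`, `q ≥ Δ + 1`, and `α` is missing at both the pivot `x` and the last fan
vertex `y (k-1)`, then shifting the fan and assigning `α` to `x y (k-1)` gives
a proper partial coloring whose domain has exactly one more edge. -/
theorem shift_fan_and_color {V : Type*} [Fintype V] [DecidableEq V]
    (G : SimpleGraph V) [DecidableRel G.Adj] (q Δ : ℕ)
    (hΔ : ∀ v, G.degree v ≤ Δ) (hqΔ : Δ + 1 ≤ q)
    (φ ψ : Sym2 V → Option (Fin q)) (hφ : ProperPartial G φ)
    (x : V) (k : ℕ) (hk : 0 < k) (y : ℕ → V)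
    (hinj : ∀ i < k, ∀ j < k, y i = y j → i = j)
    (hadj : ∀ i < k, G.Adj x (y i))
    (hblank : φ s(x, y 0) = none)
    (hcol : ∀ e ∈ G.edgeSet, e ≠ s(x, y 0) → φ e ≠ none)
    (hfan : ∀ i, 1 ≤ i → i < k → ∃ c : Fin q,
      φ s(x, y i) = some c ∧ MissingAt G φ (y (i - 1)) c)
    (α : Fin q) (hαx : MissingAt G φ x α) (hαy : MissingAt G φ (y (k - 1)) α)
    (hψ₁ : ∀ i, i < k - 1 → ψ s(x, y i) = φ s(x, y (i + 1)))
    (hψ₂ : ψ s(x, y (k - 1)) = some α)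
    (hψ₃ : ∀ e : Sym2 V, (∀ i < k, e ≠ s(x, y i)) → ψ e = φ e) :
    ProperPartial G ψ ∧
      {e ∈ G.edgeSet | ψ e ≠ none}.ncard =
        {e ∈ G.edgeSet | φ e ≠ none}.ncard + 1 := by
  have hxy : ∀ i < k, x ≠ y i := fun i hi => (hadj i hi).ne
  have hedge : ∀ i < k, s(x, y i) ∈ G.edgeSet := fun i hi => hadj i hi
  -- representative of an edge through a vertex
  have hmem : ∀ e ∈ G.edgeSet, ∀ v, v ∈ e → ∃ w, G.Adj v w ∧ e = s(v, w) := by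
    intro e he v hv
    induction e using Sym2.ind with
    | _ a b =>
      rw [Sym2.mem_iff] at hv
      rcases hv with rfl | rfl
      · exact ⟨b, he, rfl⟩
      · exact ⟨a, (G.mem_edgeSet.mp he).symm, Sym2.eq_swap⟩
  -- distinct fan edges
  have hne_fan : ∀ i < k, ∀ j < k, i ≠ j → s(x, y i) ≠ s(x, y j) := by
    intro i hi j hj hij h
    rw [Sym2.eq, Sym2.rel_iff', Prod.ext_iff, Prod.ext_iff] at h
    rcases h with ⟨-, h⟩ | ⟨h1, h2⟩
    · exact hij (hinj i hi j hj h)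
    · exact hxy j hj (by simpa using h1)
  -- ψ colors every fan edge
  have hψcol : ∀ i < k, ψ s(x, y i) ≠ none := by
    intro i hi
    rcases Nat.lt_or_ge i (k - 1) with h | h
    · obtain ⟨c, hc, -⟩ := hfan (i + 1) (Nat.le_add_left 1 i) (by omega)
      rw [hψ₁ i h, hc]; simp
    · have : i = k - 1 := by omega
      rw [this, hψ₂]; simp
  -- key: fan edge vs non-fan edge
  have key : ∀ i < k, ∀ f ∈ G.edgeSet, (∀ j < k, f ≠ s(x, y j)) →
      (∃ v, v ∈ s(x, y i) ∧ v ∈ f) → ψ s(x, y i) ≠ ψ f := by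
    intro i hi f hf hfnot ⟨v, hve, hvf⟩
    have hψf : ψ f = φ f := hψ₃ f hfnot
    rw [Sym2.mem_iff] at hve
    rcases Nat.lt_or_ge i (k - 1) with hik | hik
    · obtain ⟨c, hc, hmiss⟩ := hfan (i + 1) (Nat.le_add_left 1 i) (by omega)
      have hψe : ψ s(x, y i) = some c := by rw [hψ₁ i hik, hc]
      simp only [Nat.add_sub_cancel] at hmiss
      rcases hve with h | h
      · -- shared vertex is x
        rw [h] at hvf
        have := hφ s(x, y (i + 1)) (hedge (i + 1) (by omega)) f hf
          (fun h => hfnot (i + 1) (by omega) h.symm)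
          ⟨x, by simp, hvf⟩ (by rw [hc]; simp)
        rw [hψe, hψf, ← hc]; exact this
      · -- shared vertex is y i
        rw [h] at hvf
        obtain ⟨w, hw, rfl⟩ := hmem f hf (y i) hvf
        rw [hψe, hψf]
        exact fun h => hmiss w hw h.symm
    · have hik' : i = k - 1 := by omega
      subst hik'
      rw [hψ₂, hψf]
      rcases hve with h | h
      · rw [h] at hvf
        obtain ⟨w, hw, rfl⟩ := hmem f hf x hvf
        exact fun h => hαx w hw h.symm
      · rw [h] at hvf
        obtain ⟨w, hw, rfl⟩ := hmem f hf (y (k - 1)) hvf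
        exact fun h => hαy w hw h.symm
  -- key2: two fan edges
  have key2 : ∀ i < k, ∀ j < k, i ≠ j → ψ s(x, y i) ≠ ψ s(x, y j) := by
    have main : ∀ i < k - 1, ∀ j < k, i ≠ j → ψ s(x, y i) ≠ ψ s(x, y j) := by
      intro i hik j hj hij
      obtain ⟨c, hc, -⟩ := hfan (i + 1) (Nat.le_add_left 1 i) (by omega)
      have hψe : ψ s(x, y i) = some c := by rw [hψ₁ i hik, hc]
      rcases Nat.lt_or_ge j (k - 1) with hjk | hjk
      · have := hφ s(x, y (i + 1)) (hedge (i + 1) (by omega))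
          s(x, y (j + 1)) (hedge (j + 1) (by omega))
          (hne_fan (i + 1) (by omega) (j + 1) (by omega) (by omega))
          ⟨x, by simp, by simp⟩ (by rw [hc]; simp)
        rw [hψe, hψ₁ j hjk, ← hc]; exact this
      · have : j = k - 1 := by omega
        subst this
        rw [hψe, hψ₂]
        exact fun h => hαx (y (i + 1)) (hadj (i + 1) (by omega)) (hc.trans h)
    intro i hi j hj hij
    rcases Nat.lt_or_ge i (k - 1) with hik | hik
    · exact main i hik j hj hij
    · have : i = k - 1 := by omega
      subst this
      have hjk : j < k - 1 := by omega
      exact (main j hjk (k - 1) hi hij.symm).symm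
  constructor
  · intro e he f hf hne hsh hnone
    by_cases he' : ∃ i < k, e = s(x, y i)
    · obtain ⟨i, hi, rfl⟩ := he'
      by_cases hf' : ∃ j < k, f = s(x, y j)
      · obtain ⟨j, hj, rfl⟩ := hf'
        exact key2 i hi j hj (fun h => hne (by rw [h])) 
      · push_neg at hf'
        exact key i hi f hf hf' hsh
    · push_neg at he'
      by_cases hf' : ∃ j < k, f = s(x, y j)
      · obtain ⟨j, hj, rfl⟩ := hf'
        obtain ⟨v, hv1, hv2⟩ := hsh
        exact (key j hj e he he' ⟨v, hv2, hv1⟩).symm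
      · push_neg at hf'
        rw [hψ₃ e he', hψ₃ f hf']
        rw [hψ₃ e he'] at hnone
        exact hφ e he f hf hne hsh hnone
  · have h1 : {e ∈ G.edgeSet | ψ e ≠ none} = G.edgeSet := by
      ext e
      simp only [Set.mem_setOf_eq, Set.mem_sep_iff]
      refine ⟨fun h => h.1, fun he => ⟨he, ?_⟩⟩
      by_cases he' : ∃ i < k, e = s(x, y i)
      · obtain ⟨i, hi, rfl⟩ := he'
        exact hψcol i hi
      · push_neg at he'
        rw [hψ₃ e he']
        exact hcol e he (he' 0 hk)
    have h2 : {e ∈ G.edgeSet | φ e ≠ none} = G.edgeSet \ {s(x, y 0)} := by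
      ext e
      simp only [Set.mem_setOf_eq, Set.mem_sep_iff, Set.mem_diff,
        Set.mem_singleton_iff]
      constructor
      · rintro ⟨he, hc⟩
        exact ⟨he, fun h => hc (h ▸ hblank)⟩
      · rintro ⟨he, hne⟩
        exact ⟨he, hcol e he hne⟩
    rw [h1, h2]
    exact (Set.ncard_diff_singleton_add_one (hedge 0 hk) G.edgeSet.toFinite).symm
end

section
/- Flipping a maximal αβ-alternating path P in a proper partial coloring changes the missing sets only at the two endpoints of P: for every vertex v not an endpoint of P, the set of missing colors of v after the flip equals the set of missing colors of v before the flip. -/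
/-- The set of colors missing at `v` under `φ`. -/
def MissingSet {V : Type*} (G : SimpleGraph V) {q : ℕ}
    (φ : Sym2 V → Option (Fin q)) (v : V) : Set (Fin q) :=
  {c | ∀ w, G.Adj v w → φ s(v, w) ≠ some c}

/-- `(p 0, …, p k)` is an `αβ`-alternating path. -/
def AltPath {V : Type*} (G : SimpleGraph V) {q : ℕ}
    (φ : Sym2 V → Option (Fin q)) (α β : Fin q) (k : ℕ) (p : ℕ → V) : Prop :=
  (∀ i ≤ k, ∀ j ≤ k, p i = p j → i = j) ∧
  (∀ i < k, G.Adj (p i) (p (i + 1))) ∧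
  (∀ i < k, φ s(p i, p (i + 1)) = some (if i % 2 = 0 then α else β))

/-- Maximality: the path cannot be extended at either end. -/
def MaxAltPath {V : Type*} (G : SimpleGraph V) {q : ℕ}
    (φ : Sym2 V → Option (Fin q)) (α β : Fin q) (k : ℕ) (p : ℕ → V) : Prop :=
  AltPath G φ α β k p ∧
  (∀ w, G.Adj (p 0) w → φ s(p 0, w) ≠ some β) ∧
  (∀ w, G.Adj (p k) w → φ s(p k, w) ≠ some (if k % 2 = 0 then α else β))

lemma flip_aux {V : Type*} (G : SimpleGraph V) {q : ℕ}
    (φ ψ : Sym2 V → Option (Fin q)) (α β : Fin q) (k : ℕ) (p : ℕ → V)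
    (h1 : ∀ i < k, φ s(p i, p (i + 1)) = some (if i % 2 = 0 then α else β))
    (h2 : ∀ i < k, ψ s(p i, p (i + 1)) = some (if i % 2 = 0 then β else α))
    (h3 : ∀ e : Sym2 V, (∀ i < k, e ≠ s(p i, p (i + 1))) → ψ e = φ e)
    (hadj : ∀ i < k, G.Adj (p i) (p (i + 1)))
    (v : V) (hv0 : v ≠ p 0) (hvk : v ≠ p k) :
    MissingSet G φ v ⊆ MissingSet G ψ v := by
  intro c hc w hw hcol
  by_cases h : ∀ i < k, s(v, w) ≠ s(p i, p (i + 1))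
  · exact hc w hw (h3 _ h ▸ hcol)
  · push_neg at h
    obtain ⟨i, hik, heq⟩ := h
    rw [Sym2.eq_iff] at heq
    rcases heq with ⟨hv, hw'⟩ | ⟨hv, hw'⟩
    · -- v = p i, w = p (i+1)
      obtain ⟨j, rfl⟩ : ∃ j, i = j + 1 := by
        rcases i with _ | j
        · exact absurd hv hv0
        · exact ⟨j, rfl⟩
      have hck : some c = some (if (j + 1) % 2 = 0 then β else α) := by
        rw [← hcol, hv, hw']; exact h2 (j + 1) hik
      have hjk : j < k := by omega
      have hadjv : G.Adj v (p j) := hv ▸ (hadj j hjk).symm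
      have hφv : φ s(v, p j) = some (if j % 2 = 0 then α else β) := by
        rw [hv, Sym2.eq_swap]; exact h1 j hjk
      apply hc (p j) hadjv
      rw [hφv]
      rcases Nat.mod_two_eq_zero_or_one j with hj | hj <;>
        simp [hj, Nat.add_mod] at hck ⊢ <;> omega
    · -- v = p (i+1), w = p i
      have hik' : i + 1 < k := by
        rcases Nat.lt_or_ge (i + 1) k with h' | h'
        · exact h'
        · have : i + 1 = k := by omega
          exact absurd (this ▸ hv) hvk
      have hck : some c = some (if i % 2 = 0 then β else α) := by
        rw [← hcol, hv, hw', Sym2.eq_swap]; exact h2 i hik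
      have hadjv : G.Adj v (p (i + 2)) := hv ▸ hadj (i + 1) hik'
      have hφv : φ s(v, p (i + 2)) = some (if (i + 1) % 2 = 0 then α else β) := by
        rw [hv]; exact h1 (i + 1) hik'
      apply hc (p (i + 2)) hadjv
      rw [hφv]
      rcases Nat.mod_two_eq_zero_or_one i with hi | hi <;>
        simp [hi, Nat.add_mod] at hck ⊢ <;> omega

/-- flipping a maximal `αβ`-alternating path changes the
missing sets only at its two endpoints. -/
theorem flip_path_missing_sets {V : Type*} (G : SimpleGraph V) (q : ℕ)
    (φ ψ : Sym2 V → Option (Fin q)) (hφ : ProperPartial G φ)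
    (α β : Fin q) (hαβ : α ≠ β) (k : ℕ) (p : ℕ → V)
    (hP : MaxAltPath G φ α β k p)
    (hψ₁ : ∀ i < k, ψ s(p i, p (i + 1)) = some (if i % 2 = 0 then β else α))
    (hψ₂ : ∀ e : Sym2 V, (∀ i < k, e ≠ s(p i, p (i + 1))) → ψ e = φ e) :
    ∀ v : V, v ≠ p 0 → v ≠ p k →
      MissingSet G ψ v = MissingSet G φ v := by
  intro v hv0 hvk
  apply Set.eq_of_subset_of_subset
  · exact flip_aux G ψ φ β α k p hψ₁ hP.1.2.2 (fun e he => (hψ₂ e he).symm)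
      hP.1.2.1 v hv0 hvk
  · exact flip_aux G φ ψ α β k p hP.1.2.2 hψ₁ hψ₂ hP.1.2.1 v hv0 hvk
end
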